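/- Consider the finite-volume time iteration h_j^{n+1} = h_j^n − (α/2)(q_{j+1}^n − q_{j-1}^n) and q_j^{n+1} = q_j^n − α(F_{2,j+1/2}^n − F_{2,j-1/2}^n) + δ_t S_j^n for indices j in a range j_- < j < j_+, where α = δ_t/δ_x. If the source terms satisfy, for all n and all j_- < j < j_+, (S_{j+1}^n − S_{j-1}^n)/(2δ_x) = −A_j^{n+1} + [(D_0 F_2^n)_{j+1} − (D_0 F_2^n)_{j-1}]/(2δ_x) where (D_0 F_2^n)_j = (F_{2,j+1/2}^n − F_{2,j-1/2}^n)/δ_x and A_j^{n+1} = (g_j^{n+2} − 2g_j^{n+1} + g_j^n)/δ_t², and if the initial data satisfy h_j^0 = g_j^0 and h_j^1 = g_j^1 for all j_- < j < j_+, then h_j^n = g_j^n for all n ≥ 0 and all j_- < j < j_+. -/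

import Mathlib

/-- Discrete Lagrange multiplier property of the source term: for the finite-volume
scheme `h_j^{n+1} = h_j^n − (α/2)(q_{j+1}^n − q_{j−1}^n)`,
`q_j^{n+1} = q_j^n − α(F_{j+1/2}^n − F_{j−1/2}^n) + δt S_j^n` (with `α = δt/δx`),
if the source terms satisfy the compatibility relation with the prescribed sequence
`g_j^n` in the interior cells and the initial data match, then `h_j^n = g_j^n` in the
interior cells for all times. Here `F n j` stands for `F_{2,j+1/2}^n`. -/
theorem stmt_12 (jm jp : ℤ) (δt δx : ℝ) (hδt : 0 < δt) (hδx : 0 < δx)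
    (h q g S F : ℕ → ℤ → ℝ)
    (hh : ∀ n : ℕ, ∀ j : ℤ, jm < j → j < jp →
      h (n + 1) j = h n j - (δt / δx) / 2 * (q n (j + 1) - q n (j - 1)))
    (hq : ∀ n : ℕ, ∀ j : ℤ,
      q (n + 1) j = q n j - (δt / δx) * (F n j - F n (j - 1)) + δt * S n j)
    (hS : ∀ n : ℕ, ∀ j : ℤ, jm < j → j < jp →
      (S n (j + 1) - S n (j - 1)) / (2 * δx)
        = -((g (n + 2) j - 2 * g (n + 1) j + g n j) / δt ^ 2)
          + ((F n (j + 1) - F n j) / δx - (F n (j - 1) - F n (j - 2)) / δx)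
              / (2 * δx))
    (hinit0 : ∀ j : ℤ, jm < j → j < jp → h 0 j = g 0 j)
    (hinit1 : ∀ j : ℤ, jm < j → j < jp → h 1 j = g 1 j) :
    ∀ n : ℕ, ∀ j : ℤ, jm < j → j < jp → h n j = g n j := by
  have key : ∀ n : ℕ, ∀ j : ℤ, jm < j → j < jp →
      h (n + 2) j = 2 * h (n + 1) j - h n j
        + (g (n + 2) j - 2 * g (n + 1) j + g n j) := by
    intro n j hj1 hj2
    have e1 := hh (n + 1) j hj1 hj2
    have e0 := hh n j hj1 hj2
    have eq1 := hq n (j + 1)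
    have eq2 := hq n (j - 1)
    have eS := hS n j hj1 hj2
    have h1 : (j : ℤ) + 1 - 1 = j := by ring
    have h2 : (j : ℤ) - 1 - 1 = j - 2 := by ring
    rw [h1] at eq1
    rw [h2] at eq2
    rw [eq1, eq2] at e1
    have hδt' : δt ≠ 0 := ne_of_gt hδt
    have hδx' : δx ≠ 0 := ne_of_gt hδx
    field_simp at e1 e0 eS
    have E : 4 * δx ^ 3 * (h (n + 2) j - (2 * h (n + 1) j - h n j
        + (g (n + 2) j - 2 * g (n + 1) j + g n j))) = 0 := by
      linear_combination 2 * δx * e1 - 2 * δx ^ 2 * e0 - 2 * δx * eS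
    have h4 : (4 : ℝ) * δx ^ 3 ≠ 0 := by positivity
    have := (mul_eq_zero.mp E).resolve_left h4
    linarith
  intro n
  induction n using Nat.strong_induction_on with
  | _ n ih =>
    match n with
    | 0 => exact hinit0
    | 1 => exact hinit1
    | (m + 2) =>
      intro j hj1 hj2
      have h0 := ih m (by omega) j hj1 hj2
      have h1 := ih (m + 1) (by omega) j hj1 hj2
      rw [key m j hj1 hj2, h0, h1]; ring
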